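/- Let K be a field and A an algebra over K (a K-vector space with a bilinear product, of arbitrary dimension, with no identities assumed on the product). Then A is semisimple if and only if Ann(A) = 0 and A admits a semi-division linear basis. -/

import Mathlib

/-!  Nonassociative algebras as vector spaces with a bilinear product. -/

variable {K V : Type*} [Field K] [AddCommGroup V] [Module K V]

/-- `I` is a (two-sided) ideal of the algebra `(V, mul)`. -/
def IsIdeal (mul : V →ₗ[K] V →ₗ[K] V) (I : Submodule K V) : Prop :=
  ∀ a : V, ∀ x ∈ I, mul a x ∈ I ∧ mul x a ∈ I

/-- The ideal of `(V, mul)` generated by an element `c`. -/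
def idealGen (mul : V →ₗ[K] V →ₗ[K] V) (c : V) : Submodule K V :=
  sInf {I : Submodule K V | IsIdeal mul I ∧ c ∈ I}

/-- The annihilator `{x : x·A = A·x = 0}` of `(V, mul)` is zero. -/
def HasZeroAnn (mul : V →ₗ[K] V →ₗ[K] V) : Prop :=
  ∀ x : V, (∀ a : V, mul x a = 0 ∧ mul a x = 0) → x = 0

/-- `(V, mul)` is a simple algebra: nonzero product, only trivial ideals. -/
def IsSimpleAlgebra (mul : V →ₗ[K] V →ₗ[K] V) : Prop :=
  mul ≠ 0 ∧ ∀ I : Submodule K V, IsIdeal mul I → I = ⊥ ∨ I = ⊤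

/-- `I` is an ideal of `(V, mul)` which is simple as an algebra (with the
restricted product): nonzero product, and its only ideals are `0` and `I`. -/
def IsSimpleIdeal (mul : V →ₗ[K] V →ₗ[K] V) (I : Submodule K V) : Prop :=
  IsIdeal mul I ∧ (∃ x ∈ I, ∃ y ∈ I, mul x y ≠ 0) ∧
    ∀ J : Submodule K V, J ≤ I →
      (∀ a ∈ I, ∀ x ∈ J, mul a x ∈ J ∧ mul x a ∈ J) → J = ⊥ ∨ J = I

/-- `(V, mul)` is semisimple: it is the direct sum of a family of ideals,
each of which is simple as an algebra. -/
def IsSemisimple (mul : V →ₗ[K] V →ₗ[K] V) : Prop :=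
  ∃ 𝒮 : Set (Submodule K V), (∀ I ∈ 𝒮, IsSimpleIdeal mul I) ∧
    sSupIndep 𝒮 ∧ sSup 𝒮 = ⊤

variable {ι : Type*}

/-- The set `S_{e_i}` attached to a basis element `e_i = b i`. -/
def Sset (mul : V →ₗ[K] V →ₗ[K] V) (b : Module.Basis ι K V) (i : ι) : Set V :=
  {v | ∃ j : ι, v = b j ∧ (mul (b i) (b j) ≠ 0 ∨ mul (b j) (b i) ≠ 0)}

/-- `B` is an i-division basis. -/
def IsIDivisionBasis (mul : V →ₗ[K] V →ₗ[K] V) (b : Module.Basis ι K V) : Prop :=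
  ∀ (i : ι) (x : V),
    (mul (b i) x ≠ 0 →
      b i ∈ idealGen mul (mul (b i) x) ∧ x ∈ idealGen mul (mul (b i) x)) ∧
    (mul x (b i) ≠ 0 →
      b i ∈ idealGen mul (mul x (b i)) ∧ x ∈ idealGen mul (mul x (b i)))

/-- `B` is a weak-division basis: the i-division condition is only required
for `x` in `M_{e_i}`, the span of `S_{e_i}`. -/
def IsWeakDivisionBasis (mul : V →ₗ[K] V →ₗ[K] V) (b : Module.Basis ι K V) : Prop :=
  ∀ i : ι, ∀ x ∈ Submodule.span K (Sset mul b i),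
    (mul (b i) x ≠ 0 →
      b i ∈ idealGen mul (mul (b i) x) ∧ x ∈ idealGen mul (mul (b i) x)) ∧
    (mul x (b i) ≠ 0 →
      b i ∈ idealGen mul (mul x (b i)) ∧ x ∈ idealGen mul (mul x (b i)))

/-- The set `P_{e_i}` attached to a basis element `e_i = b i`, where
`b.coord i` is the coordinate functional `p_{e_i}`. -/
def Pset (mul : V →ₗ[K] V →ₗ[K] V) (b : Module.Basis ι K V) (i : ι) : Set V :=
  {v | ∃ j : ι, v = b j ∧
    ((∃ r : ι, b.coord i (mul (b j) (b r)) ≠ 0) ∨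
     (∃ s : ι, b.coord i (mul (b s) (b j)) ≠ 0))}

/-- The set `P_{e_i}·P_{e_i}` of products of pairs of elements of `P_{e_i}`. -/
def PPset (mul : V →ₗ[K] V →ₗ[K] V) (b : Module.Basis ι K V) (i : ι) : Set V :=
  {v | ∃ x ∈ Pset mul b i, ∃ y ∈ Pset mul b i, v = mul x y}

/-- `B` is a semi-division basis. -/
def IsSemiDivisionBasis (mul : V →ₗ[K] V →ₗ[K] V) (b : Module.Basis ι K V) : Prop :=
  IsWeakDivisionBasis mul b ∧
  ∀ i : ι, ∀ x ∈ PPset mul b i, ∀ e ∈ Sset mul b i,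
    (mul x e ≠ 0 →
      e ∈ idealGen mul (mul x e) ∧ x ∈ idealGen mul (mul x e)) ∧
    (mul e x ≠ 0 →
      e ∈ idealGen mul (mul e x) ∧ x ∈ idealGen mul (mul e x))

section L0
variable (mul : V →ₗ[K] V →ₗ[K] V)

lemma isIdeal_idealGen (c : V) : IsIdeal mul (idealGen mul c) := by
  intro a x hx
  rw [idealGen, Submodule.mem_sInf] at hx
  constructor <;>
  · rw [idealGen, Submodule.mem_sInf]
    intro I hI
    first
      | exact (hI.1 a x (hx I hI)).1
      | exact (hI.1 a x (hx I hI)).2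

lemma mem_idealGen_self (c : V) : c ∈ idealGen mul c :=
  Submodule.mem_sInf.2 fun _ hI => hI.2

lemma idealGen_le {J : Submodule K V} {c : V} (hJ : IsIdeal mul J) (hc : c ∈ J) :
    idealGen mul c ≤ J := sInf_le ⟨hJ, hc⟩

lemma idealGen_le_idealGen {c d : V} (h : c ∈ idealGen mul d) :
    idealGen mul c ≤ idealGen mul d := idealGen_le mul (isIdeal_idealGen mul d) h

variable {ι : Type*} (b : Module.Basis ι K V)

lemma sum_repr (z : V) : ∑ i ∈ (b.repr z).support, b.repr z i • b i = z := by
  conv_rhs => rw [← b.linearCombination_repr z]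
  rw [Finsupp.linearCombination_apply, Finsupp.sum]

lemma mul_sum_basis (s : Finset ι) (f : ι → K) (w : V) :
    mul (∑ i ∈ s, f i • b i) w = ∑ i ∈ s, f i • mul (b i) w := by
  simp [map_sum, map_smul, LinearMap.sum_apply, LinearMap.smul_apply]

lemma sum_basis_mul (s : Finset ι) (f : ι → K) (w : V) :
    mul w (∑ i ∈ s, f i • b i) = ∑ i ∈ s, f i • mul w (b i) := by
  simp [map_sum, map_smul]

open scoped Classical in
lemma repr_sum_apply (s : Finset ι) (f : ι → K) (j : ι) :
    b.repr (∑ i ∈ s, f i • b i) j = if j ∈ s then f j else 0 := by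
  classical
  rw [map_sum, Finsupp.finset_sum_apply]
  simp only [map_smul, Finsupp.smul_apply, Module.Basis.repr_self, Finsupp.single_apply, smul_eq_mul,
    mul_ite, mul_one, mul_zero]
  exact Finset.sum_ite_eq' s j f
end L0

section WD
variable {mul : V →ₗ[K] V →ₗ[K] V} {b : Module.Basis ι K V}

/-- From a nonzero product of `z` with a basis vector, the basis vector lies in the
ideal generated by the product. -/
lemma basis_mem_gen_right (hw : IsWeakDivisionBasis mul b) (z : V) (r : ι)
    (h : mul z (b r) ≠ 0) : b r ∈ idealGen mul (mul z (b r)) := by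
  classical
  set c := b.repr z with hc
  set zS := ∑ i ∈ c.support.filter (fun n => mul (b r) (b n) ≠ 0 ∨ mul (b n) (b r) ≠ 0),
      c i • b i with hzS
  have hmem : zS ∈ Submodule.span K (Sset mul b r) :=
    Submodule.sum_mem _ fun i hi => Submodule.smul_mem _ _
      (Submodule.subset_span ⟨i, rfl, (Finset.mem_filter.1 hi).2⟩)
  have heq : mul zS (b r) = mul z (b r) := by
    conv_rhs => rw [← sum_repr b z]
    rw [hzS, mul_sum_basis, mul_sum_basis, Finset.sum_filter]
    refine Finset.sum_congr rfl fun i _ => ?_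
    by_cases hp : mul (b r) (b i) ≠ 0 ∨ mul (b i) (b r) ≠ 0
    · simp [hp, hc]
    · push_neg at hp
      simp [hp.2]
  have := (hw r zS hmem).2 (by rw [heq]; exact h)
  rw [heq] at this
  exact this.1

lemma basis_mem_gen_left (hw : IsWeakDivisionBasis mul b) (z : V) (r : ι)
    (h : mul (b r) z ≠ 0) : b r ∈ idealGen mul (mul (b r) z) := by
  classical
  set c := b.repr z with hc
  set zS := ∑ i ∈ c.support.filter (fun n => mul (b r) (b n) ≠ 0 ∨ mul (b n) (b r) ≠ 0),
      c i • b i with hzS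
  have hmem : zS ∈ Submodule.span K (Sset mul b r) :=
    Submodule.sum_mem _ fun i hi => Submodule.smul_mem _ _
      (Submodule.subset_span ⟨i, rfl, (Finset.mem_filter.1 hi).2⟩)
  have heq : mul (b r) zS = mul (b r) z := by
    conv_rhs => rw [← sum_repr b z]
    rw [hzS, sum_basis_mul, sum_basis_mul, Finset.sum_filter]
    refine Finset.sum_congr rfl fun i _ => ?_
    by_cases hp : mul (b r) (b i) ≠ 0 ∨ mul (b i) (b r) ≠ 0
    · simp [hp, hc]
    · push_neg at hp
      simp [hp.1]
  have := (hw r zS hmem).1 (by rw [heq]; exact h)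
  rw [heq] at this
  exact this.1

/-- A nonzero element has a nonzero product with some basis vector. -/
lemma exists_basis_mul_ne (hann : HasZeroAnn mul) (b : Module.Basis ι K V) {z : V} (hz : z ≠ 0) :
    ∃ r : ι, mul z (b r) ≠ 0 ∨ mul (b r) z ≠ 0 := by
  by_contra h
  push_neg at h
  refine hz (hann z fun a => ?_)
  constructor
  · conv_lhs => rw [← sum_repr b a, sum_basis_mul]
    refine Finset.sum_eq_zero fun i _ => ?_
    rw [(h i).1, smul_zero]
  · conv_lhs => rw [← sum_repr b a, mul_sum_basis]
    refine Finset.sum_eq_zero fun i _ => ?_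
    rw [(h i).2, smul_zero]

/-- Nonzero products of basis vectors identify the generated ideals. -/
lemma gen_eq_gen_of_basis_mul_ne (hw : IsWeakDivisionBasis mul b) {i j : ι}
    (h : mul (b i) (b j) ≠ 0) :
    idealGen mul (b i) = idealGen mul (mul (b i) (b j)) ∧
    idealGen mul (b j) = idealGen mul (mul (b i) (b j)) := by
  have hbj : (b j : V) ∈ Submodule.span K (Sset mul b i) :=
    Submodule.subset_span ⟨j, rfl, Or.inl h⟩
  obtain ⟨h1, h2⟩ := (hw i (b j) hbj).1 h
  constructor
  · refine le_antisymm (idealGen_le_idealGen mul h1) (idealGen_le_idealGen mul ?_)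
    exact ((isIdeal_idealGen mul (b i)) (b j) (b i) (mem_idealGen_self mul (b i))).2
  · refine le_antisymm (idealGen_le_idealGen mul h2) (idealGen_le_idealGen mul ?_)
    exact ((isIdeal_idealGen mul (b j)) (b i) (b j) (mem_idealGen_self mul (b j))).1

lemma gen_eq_of_basis_mul_ne (hw : IsWeakDivisionBasis mul b) {i j : ι}
    (h : mul (b i) (b j) ≠ 0) : idealGen mul (b i) = idealGen mul (b j) := by
  obtain ⟨h1, h2⟩ := gen_eq_gen_of_basis_mul_ne hw h
  rw [h1, h2]

end WD

section Supp
variable {mul : V →ₗ[K] V →ₗ[K] V} {b : Module.Basis ι K V}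

/-- Key support lemma: every basis component of `z` lies in the ideal generated by `z`. -/
lemma basis_mem_gen_of_mem_support (hann : HasZeroAnn mul) (hw : IsWeakDivisionBasis mul b)
    (z : V) {i : ι} (hi : i ∈ (b.repr z).support) : b i ∈ idealGen mul z := by
  classical
  by_contra hbi
  set Q := idealGen mul z with hQ
  set c := b.repr z with hc
  set bad := c.support.filter (fun n => b n ∉ Q) with hbad
  set z' := ∑ n ∈ bad, c n • b n with hz'
  have hiz : i ∈ bad := Finset.mem_filter.2 ⟨hi, hbi⟩
  have hz'ne : z' ≠ 0 := by
    intro h0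
    have := repr_sum_apply b bad (fun n => c n) i
    rw [← hz', h0, map_zero, if_pos hiz] at this
    exact Finsupp.mem_support_iff.1 hi (by rw [hc] at this ⊢; exact this.symm)
  have hz'Q : z' ∈ Q := by
    have hsplit := Finset.sum_filter_add_sum_filter_not c.support (fun n => b n ∉ Q)
      (fun n => c n • b n)
    have hgood : ∑ n ∈ c.support.filter (fun n => ¬ b n ∉ Q), c n • b n ∈ Q := by
      refine Submodule.sum_mem _ fun n hn => Submodule.smul_mem _ _ ?_
      have := (Finset.mem_filter.1 hn).2
      exact not_not.1 this
    have hzQ : z ∈ Q := mem_idealGen_self mul z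
    have : z' + ∑ n ∈ c.support.filter (fun n => ¬ b n ∉ Q), c n • b n = z := by
      rw [hz', hbad, hsplit]; exact sum_repr b z
    have := this ▸ hzQ
    exact (Submodule.add_mem_iff_left _ hgood).1 this
  obtain ⟨r, hr⟩ := exists_basis_mul_ne hann b hz'ne
  have hQideal : IsIdeal mul Q := isIdeal_idealGen mul z
  rcases hr with h | h
  · have hbr : b r ∈ idealGen mul (mul z' (b r)) := basis_mem_gen_right hw z' r h
    have hprodQ : mul z' (b r) ∈ Q := (hQideal (b r) z' hz'Q).2
    have hbrQ : b r ∈ Q := idealGen_le mul hQideal hprodQ hbr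
    have hsum : mul z' (b r) = ∑ n ∈ bad, c n • mul (b n) (b r) := by
      rw [hz', mul_sum_basis]
    obtain ⟨n, hn, hne⟩ := Finset.exists_ne_zero_of_sum_ne_zero (by rw [← hsum]; exact h)
    have hnr : mul (b n) (b r) ≠ 0 := fun h0 => hne (by rw [h0, smul_zero])
    have : b n ∈ Q := by
      have := gen_eq_of_basis_mul_ne hw hnr
      have h1 : b n ∈ idealGen mul (b r) := this ▸ mem_idealGen_self mul (b n)
      exact idealGen_le mul hQideal hbrQ h1
    exact (Finset.mem_filter.1 hn).2 this
  · have hbr : b r ∈ idealGen mul (mul (b r) z') := basis_mem_gen_left hw z' r h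
    have hprodQ : mul (b r) z' ∈ Q := (hQideal (b r) z' hz'Q).1
    have hbrQ : b r ∈ Q := idealGen_le mul hQideal hprodQ hbr
    have hsum : mul (b r) z' = ∑ n ∈ bad, c n • mul (b r) (b n) := by
      rw [hz', sum_basis_mul]
    obtain ⟨n, hn, hne⟩ := Finset.exists_ne_zero_of_sum_ne_zero (by rw [← hsum]; exact h)
    have hnr : mul (b r) (b n) ≠ 0 := fun h0 => hne (by rw [h0, smul_zero])
    have : b n ∈ Q := by
      have := gen_eq_of_basis_mul_ne hw hnr
      have h1 : b n ∈ idealGen mul (b n) := mem_idealGen_self mul (b n)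
      rw [← this] at h1
      exact idealGen_le mul hQideal hbrQ h1
    exact (Finset.mem_filter.1 hn).2 this

/-- Elements of the span of a subfamily of the basis have vanishing coordinates
outside the subfamily. -/
lemma repr_eq_zero_of_mem_span {P : ι → Prop} {x : V}
    (hx : x ∈ Submodule.span K {v | ∃ p, v = b p ∧ P p}) {j : ι} (hj : ¬ P j) :
    b.repr x j = 0 := by
  classical
  induction hx using Submodule.span_induction with
  | mem v hv =>
    obtain ⟨p, rfl, hp⟩ := hv
    rw [Module.Basis.repr_self, Finsupp.single_apply]
    split
    · next heq => exact absurd (heq ▸ hp) hj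
    · rfl
  | zero => simp
  | add u w _ _ hu hw => rw [map_add, Finsupp.add_apply, hu, hw, add_zero]
  | smul a u _ hu => rw [map_smul, Finsupp.smul_apply, hu, smul_zero]

end Supp

section SD
variable {mul : V →ₗ[K] V →ₗ[K] V} {b : Module.Basis ι K V}

/-- Key lemma: a nonzero product of two basis vectors lies in the ideal generated by
the basis vector of any of its nonzero coordinates. -/
lemma prod_mem_gen_of_mem_support (hann : HasZeroAnn mul) (hsd : IsSemiDivisionBasis mul b)
    {k j m : ι} (hm : m ∈ (b.repr (mul (b k) (b j))).support) :
    mul (b k) (b j) ∈ idealGen mul (b m) := by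
  classical
  obtain ⟨hw, hs⟩ := hsd
  set x := mul (b k) (b j) with hx
  set Q := idealGen mul (b m) with hQdef
  have hQideal : IsIdeal mul Q := isIdeal_idealGen mul (b m)
  set c := b.repr x with hc
  set goodF := c.support.filter (fun n => b n ∈ Q) with hgoodF
  set q := ∑ n ∈ goodF, c n • b n with hq
  set y := ∑ n ∈ c.support.filter (fun n => ¬ b n ∈ Q), c n • b n with hy
  have hxqy : q + y = x := by
    rw [hq, hy, hgoodF, Finset.sum_filter_add_sum_filter_not]
    exact sum_repr b x
  have hmgood : m ∈ goodF := Finset.mem_filter.2 ⟨hm, mem_idealGen_self mul (b m)⟩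
  have hq0 : q ≠ 0 := by
    intro h0
    have := repr_sum_apply b goodF (fun n => c n) m
    rw [← hq, h0, map_zero, if_pos hmgood] at this
    exact Finsupp.mem_support_iff.1 hm (by rw [hc] at this ⊢; exact this.symm)
  have hqQ : q ∈ Q := Submodule.sum_mem _ fun n hn =>
    Submodule.smul_mem _ _ (Finset.mem_filter.1 hn).2
  -- the element x lies in `PPset` at every index of its support
  have hxPP : ∀ n ∈ c.support, x ∈ PPset mul b n := by
    intro n hn
    have hcn : b.coord n x ≠ 0 := by
      rw [Module.Basis.coord_apply, ← hc]; exact Finsupp.mem_support_iff.1 hn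
    exact ⟨b k, ⟨k, rfl, Or.inl ⟨j, by rw [← hx]; exact hcn⟩⟩,
           b j, ⟨j, rfl, Or.inr ⟨k, by rw [← hx]; exact hcn⟩⟩, rfl⟩
  obtain ⟨s, hs'⟩ := exists_basis_mul_ne hann b hq0
  rcases hs' with hqs | hqs
  · -- right multiplication case
    have hsum : mul q (b s) = ∑ n ∈ goodF, c n • mul (b n) (b s) := by
      rw [hq, mul_sum_basis]
    obtain ⟨n, hn, hne⟩ := Finset.exists_ne_zero_of_sum_ne_zero (by rw [← hsum]; exact hqs)
    have hns : mul (b n) (b s) ≠ 0 := fun h0 => hne (by rw [h0, smul_zero])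
    have hbnQ : b n ∈ Q := (Finset.mem_filter.1 hn).2
    have hbsQ : b s ∈ Q := by
      have hgen := gen_eq_of_basis_mul_ne hw hns
      have : b s ∈ idealGen mul (b n) := hgen ▸ mem_idealGen_self mul (b s)
      exact idealGen_le mul hQideal hbnQ this
    by_cases hxs : mul x (b s) = 0
    · exfalso
      have hysne : mul y (b s) ≠ 0 := by
        have : mul q (b s) + mul y (b s) = mul x (b s) := by
          rw [← hxqy]; simp [map_add]
        rw [hxs] at this
        intro h0
        rw [h0, add_zero] at this
        exact hqs this
      have hysum : mul y (b s) = ∑ n ∈ c.support.filter (fun n => ¬ b n ∈ Q),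
          c n • mul (b n) (b s) := by rw [hy, mul_sum_basis]
      obtain ⟨n', hn', hne'⟩ := Finset.exists_ne_zero_of_sum_ne_zero
        (by rw [← hysum]; exact hysne)
      have hn's : mul (b n') (b s) ≠ 0 := fun h0 => hne' (by rw [h0, smul_zero])
      have : b n' ∈ Q := by
        have hgen := gen_eq_of_basis_mul_ne hw hn's
        have : b n' ∈ idealGen mul (b s) := hgen ▸ mem_idealGen_self mul (b n')
        exact idealGen_le mul hQideal hbsQ this
      exact (Finset.mem_filter.1 hn').2 this
    · -- semi-division at n gives x ∈ Q
      have hbsS : b s ∈ Sset mul b n := ⟨s, rfl, Or.inl hns⟩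
      have hnx : n ∈ c.support := Finset.mem_of_mem_filter _ hn
      have := (hs n x (hxPP n hnx) (b s) hbsS).1 hxs
      have hxmem : x ∈ idealGen mul (mul x (b s)) := this.2
      have hprod : mul x (b s) ∈ idealGen mul (b s) :=
        ((isIdeal_idealGen mul (b s)) x (b s) (mem_idealGen_self mul (b s))).1
      exact idealGen_le mul hQideal hbsQ (idealGen_le_idealGen mul hprod hxmem)
  · -- left multiplication case
    have hsum : mul (b s) q = ∑ n ∈ goodF, c n • mul (b s) (b n) := by
      rw [hq, sum_basis_mul]
    obtain ⟨n, hn, hne⟩ := Finset.exists_ne_zero_of_sum_ne_zero (by rw [← hsum]; exact hqs)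
    have hns : mul (b s) (b n) ≠ 0 := fun h0 => hne (by rw [h0, smul_zero])
    have hbnQ : b n ∈ Q := (Finset.mem_filter.1 hn).2
    have hbsQ : b s ∈ Q := by
      have hgen := gen_eq_of_basis_mul_ne hw hns
      have : b s ∈ idealGen mul (b n) := by
        rw [← hgen]; exact mem_idealGen_self mul (b s)
      exact idealGen_le mul hQideal hbnQ this
    by_cases hxs : mul (b s) x = 0
    · exfalso
      have hysne : mul (b s) y ≠ 0 := by
        have : mul (b s) q + mul (b s) y = mul (b s) x := by
          rw [← hxqy]; simp [map_add]
        rw [hxs] at this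
        intro h0
        rw [h0, add_zero] at this
        exact hqs this
      have hysum : mul (b s) y = ∑ n ∈ c.support.filter (fun n => ¬ b n ∈ Q),
          c n • mul (b s) (b n) := by rw [hy, sum_basis_mul]
      obtain ⟨n', hn', hne'⟩ := Finset.exists_ne_zero_of_sum_ne_zero
        (by rw [← hysum]; exact hysne)
      have hn's : mul (b s) (b n') ≠ 0 := fun h0 => hne' (by rw [h0, smul_zero])
      have : b n' ∈ Q := by
        have hgen := gen_eq_of_basis_mul_ne hw hn's
        have : b n' ∈ idealGen mul (b s) := by
          rw [hgen]; exact mem_idealGen_self mul (b n')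
        exact idealGen_le mul hQideal hbsQ this
      exact (Finset.mem_filter.1 hn').2 this
    · have hbsS : b s ∈ Sset mul b n := ⟨s, rfl, Or.inr hns⟩
      have hnx : n ∈ c.support := Finset.mem_of_mem_filter _ hn
      have := (hs n x (hxPP n hnx) (b s) hbsS).2 hxs
      have hxmem : x ∈ idealGen mul (mul (b s) x) := this.2
      have hprod : mul (b s) x ∈ idealGen mul (b s) :=
        ((isIdeal_idealGen mul (b s)) x (b s) (mem_idealGen_self mul (b s))).2
      exact idealGen_le mul hQideal hbsQ (idealGen_le_idealGen mul hprod hxmem)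
end SD

section Grading
variable {mul : V →ₗ[K] V →ₗ[K] V} {b : Module.Basis ι K V}

/-- Products of basis vectors with a basis vector of the class of `m` land in the
span of the class of `m`. -/
lemma mul_basis_mem_classSpan (hann : HasZeroAnn mul) (hsd : IsSemiDivisionBasis mul b)
    (m : ι) (k p : ι) (hp : idealGen mul (b p) = idealGen mul (b m)) :
    mul (b k) (b p) ∈ Submodule.span K
        {v | ∃ n, v = b n ∧ idealGen mul (b n) = idealGen mul (b m)} ∧
    mul (b p) (b k) ∈ Submodule.span K
        {v | ∃ n, v = b n ∧ idealGen mul (b n) = idealGen mul (b m)} := by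
  have hw := hsd.1
  have key : ∀ k' j' : ι, idealGen mul (b j') = idealGen mul (b m) ∨
      idealGen mul (b k') = idealGen mul (b m) →
      mul (b k') (b j') ∈ Submodule.span K
        {v | ∃ n, v = b n ∧ idealGen mul (b n) = idealGen mul (b m)} := by
    intro k' j' hj'
    by_cases hu0 : mul (b k') (b j') = 0
    · rw [hu0]; exact Submodule.zero_mem _
    · set u := mul (b k') (b j') with hu
      have hpack := gen_eq_gen_of_basis_mul_ne hw hu0
      have hGu : idealGen mul u = idealGen mul (b m) := by
        rcases hj' with h | h
        · rw [← hpack.2, h]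
        · rw [← hpack.1, h]
      have hcomp : ∀ n ∈ (b.repr u).support,
          idealGen mul (b n) = idealGen mul (b m) := by
        intro n hn
        have h1 : b n ∈ idealGen mul u :=
          basis_mem_gen_of_mem_support hann hw u hn
        have h2 : u ∈ idealGen mul (b n) :=
          prod_mem_gen_of_mem_support hann hsd hn
        have : idealGen mul (b n) = idealGen mul u :=
          le_antisymm (idealGen_le_idealGen mul h1) (idealGen_le_idealGen mul h2)
        rw [this, hGu]
      rw [← sum_repr b u]
      exact Submodule.sum_mem _ fun n hn => Submodule.smul_mem _ _
        (Submodule.subset_span ⟨n, rfl, hcomp n hn⟩)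
  exact ⟨key k p (Or.inl hp), key p k (Or.inr hp)⟩

/-- The span of the class of `m` is an ideal. -/
lemma isIdeal_classSpan (hann : HasZeroAnn mul) (hsd : IsSemiDivisionBasis mul b) (m : ι) :
    IsIdeal mul (Submodule.span K
      {v | ∃ n, v = b n ∧ idealGen mul (b n) = idealGen mul (b m)}) := by
  intro a x hx
  induction hx using Submodule.span_induction with
  | mem v hv =>
    obtain ⟨p, rfl, hp⟩ := hv
    constructor
    · rw [← sum_repr b a, mul_sum_basis]
      exact Submodule.sum_mem _ fun k _ => Submodule.smul_mem _ _
        (mul_basis_mem_classSpan hann hsd m k p hp).1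
    · rw [← sum_repr b a, sum_basis_mul]
      exact Submodule.sum_mem _ fun k _ => Submodule.smul_mem _ _
        (mul_basis_mem_classSpan hann hsd m k p hp).2
  | zero => simp only [map_zero, LinearMap.zero_apply]; exact ⟨Submodule.zero_mem _, Submodule.zero_mem _⟩
  | add u w _ _ hu hw =>
    simp only [map_add, LinearMap.add_apply]
    exact ⟨Submodule.add_mem _ hu.1 hw.1, Submodule.add_mem _ hu.2 hw.2⟩
  | smul t u _ hu =>
    simp only [map_smul, LinearMap.smul_apply]
    exact ⟨Submodule.smul_mem _ _ hu.1, Submodule.smul_mem _ _ hu.2⟩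

/-- Grading: the ideal generated by a basis vector is the span of its class. -/
lemma idealGen_basis_eq_classSpan (hann : HasZeroAnn mul) (hsd : IsSemiDivisionBasis mul b)
    (m : ι) : idealGen mul (b m) = Submodule.span K
      {v | ∃ n, v = b n ∧ idealGen mul (b n) = idealGen mul (b m)} := by
  refine le_antisymm (idealGen_le mul (isIdeal_classSpan hann hsd m)
    (Submodule.subset_span ⟨m, rfl, rfl⟩)) ?_
  rw [Submodule.span_le]
  rintro v ⟨p, rfl, hp⟩
  rw [← hp]
  exact mem_idealGen_self mul (b p)

/-- A basis vector lying in the ideal generated by another generates the same ideal. -/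
lemma gen_eq_of_basis_mem_gen (hann : HasZeroAnn mul) (hsd : IsSemiDivisionBasis mul b)
    {m p : ι} (hp : b p ∈ idealGen mul (b m)) :
    idealGen mul (b p) = idealGen mul (b m) := by
  classical
  rw [idealGen_basis_eq_classSpan hann hsd m] at hp
  by_contra hne
  have := repr_eq_zero_of_mem_span (P := fun n => idealGen mul (b n) = idealGen mul (b m))
    hp hne
  rw [Module.Basis.repr_self, Finsupp.single_apply, if_pos rfl] at this
  exact one_ne_zero this
end Grading

section Backward
variable {mul : V →ₗ[K] V →ₗ[K] V} {b : Module.Basis ι K V}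

lemma isSimpleIdeal_gen_basis (hann : HasZeroAnn mul) (hsd : IsSemiDivisionBasis mul b)
    (m : ι) : IsSimpleIdeal mul (idealGen mul (b m)) := by
  have hw := hsd.1
  have hQideal : IsIdeal mul (idealGen mul (b m)) := isIdeal_idealGen mul (b m)
  refine ⟨hQideal, ?_, ?_⟩
  · -- nonzero product inside the ideal
    obtain ⟨r, hr⟩ := exists_basis_mul_ne hann b (b.ne_zero m)
    rcases hr with h | h
    · refine ⟨b m, mem_idealGen_self mul (b m), b r, ?_, h⟩
      rw [gen_eq_of_basis_mul_ne hw h]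
      exact mem_idealGen_self mul (b r)
    · refine ⟨b r, ?_, b m, mem_idealGen_self mul (b m), h⟩
      rw [← gen_eq_of_basis_mul_ne hw h]
      exact mem_idealGen_self mul (b r)
  · -- minimality
    intro J hJle hJst
    by_cases hJbot : J = ⊥
    · exact Or.inl hJbot
    right
    obtain ⟨z, hzJ, hz0⟩ := (Submodule.ne_bot_iff J).1 hJbot
    -- J is an ideal of the whole algebra
    have hJideal : IsIdeal mul J := by
      intro a x hx
      have key : ∀ k : ι, mul (b k) x ∈ J ∧ mul x (b k) ∈ J := by
        intro k
        by_cases hk : b k ∈ idealGen mul (b m)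
        · exact hJst (b k) hk x hx
        · -- products vanish
          have hxQ : x ∈ idealGen mul (b m) := hJle hx
          rw [idealGen_basis_eq_classSpan hann hsd m] at hxQ
          have hzero : ∀ w ∈ Submodule.span K
              {v | ∃ n, v = b n ∧ idealGen mul (b n) = idealGen mul (b m)},
              mul (b k) w = 0 ∧ mul w (b k) = 0 := by
            intro w hw'
            induction hw' using Submodule.span_induction with
            | mem v hv =>
              obtain ⟨p, rfl, hp⟩ := hv
              constructor
              · by_contra hne
                refine hk ?_
                rw [← hp, ← gen_eq_of_basis_mul_ne hw hne]
                exact mem_idealGen_self mul (b k)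
              · by_contra hne
                refine hk ?_
                rw [← hp, gen_eq_of_basis_mul_ne hw hne]
                exact mem_idealGen_self mul (b k)
            | zero => simp
            | add u w _ _ hu hw' =>
                exact ⟨by rw [map_add, hu.1, hw'.1, add_zero],
                  by rw [map_add, LinearMap.add_apply, hu.2, hw'.2, add_zero]⟩
            | smul t u _ hu =>
                exact ⟨by rw [map_smul, hu.1, smul_zero],
                  by rw [map_smul, LinearMap.smul_apply, hu.2, smul_zero]⟩
          have := hzero x hxQ
          rw [this.1, this.2]
          exact ⟨Submodule.zero_mem _, Submodule.zero_mem _⟩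
      constructor
      · rw [← sum_repr b a, mul_sum_basis]
        exact Submodule.sum_mem _ fun k _ => Submodule.smul_mem _ _ (key k).1
      · rw [← sum_repr b a, sum_basis_mul]
        exact Submodule.sum_mem _ fun k _ => Submodule.smul_mem _ _ (key k).2
    have hsupp : (b.repr z).support.Nonempty := by
      rw [Finsupp.support_nonempty_iff]
      intro h0
      exact hz0 ((LinearEquiv.map_eq_zero_iff b.repr).1 h0)
    obtain ⟨n, hn⟩ := hsupp
    have hbnJ : b n ∈ J :=
      idealGen_le mul hJideal hzJ (basis_mem_gen_of_mem_support hann hw z hn)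
    have hbnQ : b n ∈ idealGen mul (b m) := hJle hbnJ
    have hGn : idealGen mul (b n) = idealGen mul (b m) :=
      gen_eq_of_basis_mem_gen hann hsd hbnQ
    exact le_antisymm hJle (by rw [← hGn]; exact idealGen_le mul hJideal hbnJ)

lemma isSemisimple_of_semiDivisionBasis (hann : HasZeroAnn mul)
    (hsd : IsSemiDivisionBasis mul b) : IsSemisimple mul := by
  refine ⟨Set.range (fun n : ι => idealGen mul (b n)), ?_, ?_, ?_⟩
  · rintro I hI
    rw [Set.mem_range] at hI
    obtain ⟨n, hn⟩ := hI
    have hn' : idealGen mul (b n) = I := hn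
    rw [← hn']
    exact isSimpleIdeal_gen_basis hann hsd n
  · intro Q hQ
    rw [Set.mem_range] at hQ
    obtain ⟨n, hQn⟩ := hQ
    have hQn' : idealGen mul (b n) = Q := hQn
    subst hQn'
    have hle : sSup (Set.range (fun n : ι => idealGen mul (b n)) \ {idealGen mul (b n)}) ≤
        Submodule.span K {v | ∃ p, v = b p ∧ ¬ idealGen mul (b p) = idealGen mul (b n)} := by
      refine sSup_le ?_
      rintro Q' ⟨hmem, hne⟩
      rw [Set.mem_range] at hmem
      obtain ⟨m', hm'⟩ := hmem
      have hm'' : idealGen mul (b m') = Q' := hm'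
      rw [← hm'']
      rw [idealGen_basis_eq_classSpan hann hsd m', Submodule.span_le]
      rintro v ⟨p, rfl, hp⟩
      refine Submodule.subset_span ⟨p, rfl, ?_⟩
      rw [hp, hm'']
      exact fun h => hne (by rw [Set.mem_singleton_iff]; exact h)
    rw [disjoint_iff_inf_le]
    intro x hx
    obtain ⟨hxa, hxb⟩ := Submodule.mem_inf.1 hx
    have hx1 : x ∈ Submodule.span K
        {v | ∃ p, v = b p ∧ idealGen mul (b p) = idealGen mul (b n)} := by
      rwa [idealGen_basis_eq_classSpan hann hsd n] at hxa
    have hx2 := hle hxb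
    have hrepr : b.repr x = 0 := by
      ext j
      by_cases hj : idealGen mul (b j) = idealGen mul (b n)
      · exact repr_eq_zero_of_mem_span
          (P := fun p => ¬ idealGen mul (b p) = idealGen mul (b n)) hx2 (not_not.2 hj)
      · exact repr_eq_zero_of_mem_span
          (P := fun p => idealGen mul (b p) = idealGen mul (b n)) hx1 hj
    simpa using (LinearEquiv.map_eq_zero_iff b.repr).1 hrepr
  · rw [eq_top_iff, ← b.span_eq, Submodule.span_le]
    rintro v ⟨n, rfl⟩
    have h1 : idealGen mul (b n) ∈ Set.range (fun n : ι => idealGen mul (b n)) := ⟨n, rfl⟩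
    exact le_sSup h1 (mem_idealGen_self mul (b n))
end Backward

section Forward
variable {mul : V →ₗ[K] V →ₗ[K] V}

lemma hasZeroAnn_of_isSemisimple (h : IsSemisimple mul) : HasZeroAnn mul := by
  classical
  obtain ⟨S, hsimp, hindep, htop⟩ := h
  intro x hx
  have hsup : ⨆ I : S, (I : Submodule K V) = ⊤ := by rw [← sSup_eq_iSup']; exact htop
  have hxmem : x ∈ ⨆ I : S, (I : Submodule K V) := by rw [hsup]; exact Submodule.mem_top
  rw [Submodule.mem_iSup_iff_exists_finsupp] at hxmem
  obtain ⟨f, hf, hsum⟩ := hxmem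
  suffices hzero : ∀ I : S, f I = 0 by
    rw [← hsum, Finsupp.sum]
    exact Finset.sum_eq_zero fun I _ => hzero I
  intro I₀
  by_cases hI₀s : I₀ ∈ f.support
  swap
  · exact Finsupp.notMem_support_iff.1 hI₀s
  have hann0 : ∀ a : V, mul a (f I₀) = 0 ∧ mul (f I₀) a = 0 := by
    intro a
    have hrest : ∀ u : V, (∀ I : S, I ≠ I₀ → ∃ w ∈ (I : Submodule K V), u = w → True) → True :=
      fun _ _ => trivial
    have key : ∀ u : V, u ∈ (I₀ : Submodule K V) →
        u ∈ sSup (S \ {(I₀ : Submodule K V)}) → u = 0 := by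
      intro u h1 h2
      have hmem : u ∈ (I₀ : Submodule K V) ⊓ sSup (S \ {(I₀ : Submodule K V)}) :=
        Submodule.mem_inf.2 ⟨h1, h2⟩
      exact (Submodule.mem_bot K).1 ((hindep I₀.2).le_bot hmem)
    have hsum_erase : ∀ g : V →ₗ[K] V, g x = g (f I₀) + ∑ I ∈ f.support.erase I₀, g (f I) := by
      intro g
      rw [← hsum, Finsupp.sum, map_sum, ← Finset.add_sum_erase _ _ hI₀s]
    have hmem_erase : ∀ g : V →ₗ[K] V, (∀ I : S, g (f I) ∈ (I : Submodule K V)) →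
        ∑ I ∈ f.support.erase I₀, g (f I) ∈ sSup (S \ {(I₀ : Submodule K V)}) := by
      intro g hg
      refine Submodule.sum_mem _ fun I hI => ?_
      have hne : I ≠ I₀ := Finset.ne_of_mem_erase hI
      have hne' : (I : Submodule K V) ≠ (I₀ : Submodule K V) := fun hc => hne (Subtype.ext hc)
      have hmemd : (I : Submodule K V) ∈ S \ {(I₀ : Submodule K V)} := ⟨I.2, hne'⟩
      exact le_sSup hmemd (hg I)
    constructor
    · have h1 : mul a (f I₀) ∈ (I₀ : Submodule K V) :=
        ((hsimp I₀ I₀.2).1 a (f I₀) (hf I₀)).1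
      have hga := hsum_erase (mul a)
      rw [(hx a).2] at hga
      have h2 : mul a (f I₀) ∈ sSup (S \ {(I₀ : Submodule K V)}) := by
        have : mul a (f I₀) = - ∑ I ∈ f.support.erase I₀, mul a (f I) := by
          rw [eq_neg_iff_add_eq_zero.2 hga.symm]
        rw [this]
        exact Submodule.neg_mem _ (hmem_erase (mul a)
          (fun I => ((hsimp I I.2).1 a (f I) (hf I)).1))
      exact key _ h1 h2
    · have h1 : mul (f I₀) a ∈ (I₀ : Submodule K V) :=
        ((hsimp I₀ I₀.2).1 a (f I₀) (hf I₀)).2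
      have hga := hsum_erase ((LinearMap.flip mul) a)
      have hga' : (0 : V) = mul (f I₀) a + ∑ I ∈ f.support.erase I₀, mul (f I) a := by
        simpa [LinearMap.flip_apply, (hx a).1] using hga
      have h2 : mul (f I₀) a ∈ sSup (S \ {(I₀ : Submodule K V)}) := by
        have : mul (f I₀) a = - ∑ I ∈ f.support.erase I₀, mul (f I) a := by
          rw [eq_neg_iff_add_eq_zero, ← hga']
        rw [this]
        exact Submodule.neg_mem _ (hmem_erase ((LinearMap.flip mul) a)
          (fun I => ((hsimp I I.2).1 a (f I) (hf I)).2))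
      exact key _ h1 h2
  -- now use simplicity of I₀
  obtain ⟨hI₀ideal, ⟨u, hu, w, hw, hne⟩, hmin⟩ := hsimp I₀ I₀.2
  have hJle : (K ∙ (f I₀)) ≤ (I₀ : Submodule K V) :=
    (Submodule.span_singleton_le_iff_mem _ _).2 (hf I₀)
  have hstab : ∀ a ∈ (I₀ : Submodule K V), ∀ y ∈ (K ∙ (f I₀)),
      mul a y ∈ (K ∙ (f I₀)) ∧ mul y a ∈ (K ∙ (f I₀)) := by
    intro a _ y hy
    obtain ⟨c, rfl⟩ := Submodule.mem_span_singleton.1 hy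
    constructor
    · rw [map_smul, (hann0 a).1, smul_zero]; exact Submodule.zero_mem _
    · rw [map_smul, LinearMap.smul_apply, (hann0 a).2, smul_zero]
      exact Submodule.zero_mem _
  rcases hmin (K ∙ (f I₀)) hJle hstab with hbot | heq
  · exact Submodule.span_singleton_eq_bot.1 hbot
  · exfalso
    rw [← heq] at hu
    obtain ⟨c, rfl⟩ := Submodule.mem_span_singleton.1 hu
    refine hne ?_
    rw [map_smul, LinearMap.smul_apply, (hann0 w).2, smul_zero]
end Forward

section ForwardBasis
variable {mul : V →ₗ[K] V →ₗ[K] V}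

/-- In a semisimple algebra, every nonzero element of a simple ideal generates it. -/
lemma idealGen_eq_of_mem_simple {I : Submodule K V} (hI : IsSimpleIdeal mul I)
    {x : V} (hx : x ∈ I) (hx0 : x ≠ 0) : idealGen mul x = I := by
  refine le_antisymm (idealGen_le mul hI.1 hx) ?_
  have hstab : ∀ a ∈ I, ∀ w ∈ idealGen mul x,
      mul a w ∈ idealGen mul x ∧ mul w a ∈ idealGen mul x :=
    fun a _ w hw => (isIdeal_idealGen mul x) a w hw
  rcases hI.2.2 (idealGen mul x) (idealGen_le mul hI.1 hx) hstab with hbot | heq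
  · exact absurd (hbot ▸ mem_idealGen_self mul x) (by simp [hx0])
  · exact heq.ge

lemma exists_semiDivisionBasis_of_isSemisimple (h : IsSemisimple mul) :
    ∃ (s : Set V) (b : Module.Basis s K V), IsSemiDivisionBasis mul b := by
  classical
  obtain ⟨S, hsimp, hindep, htop⟩ := h
  have hind : iSupIndep (fun I : S => (I : Submodule K V)) := (sSupIndep_iff S).mp hindep
  have hsup : ⨆ I : S, (I : Submodule K V) = ⊤ := by rw [← sSup_eq_iSup']; exact htop
  have hint : DirectSum.IsInternal (fun I : S => (I : Submodule K V)) :=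
    DirectSum.isInternal_submodule_of_iSupIndep_of_iSup_eq_top hind hsup
  set v : ∀ I : S, Module.Basis (Module.Basis.ofVectorSpaceIndex K I) K I :=
    fun I => Module.Basis.ofVectorSpace K I with hv
  set B := hint.collectedBasis v with hB
  have hIdeal : ∀ I : S, IsIdeal mul (I : Submodule K V) := fun I => (hsimp I I.2).1
  have hBmem : ∀ a : (Σ I : S, Module.Basis.ofVectorSpaceIndex K I), B a ∈ (a.1 : Submodule K V) :=
    fun a => hint.collectedBasis_mem v a
  -- products of basis vectors from distinct ideals vanish
  have hG1 : ∀ a a' : (Σ I : S, Module.Basis.ofVectorSpaceIndex K I), a.1 ≠ a'.1 →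
      mul (B a) (B a') = 0 := by
    intro a a' hne
    have h1 : mul (B a) (B a') ∈ (a.1 : Submodule K V) :=
      (hIdeal a.1 (B a') (B a) (hBmem a)).2
    have h2 : mul (B a) (B a') ∈ (a'.1 : Submodule K V) :=
      (hIdeal a'.1 (B a) (B a') (hBmem a')).1
    have hne' : (a'.1 : Submodule K V) ≠ (a.1 : Submodule K V) :=
      fun hc => hne (Subtype.ext hc.symm)
    have hmd : (a'.1 : Submodule K V) ∈ S \ {(a.1 : Submodule K V)} := ⟨a'.1.2, hne'⟩
    have h2' : mul (B a) (B a') ∈ sSup (S \ {(a.1 : Submodule K V)}) := le_sSup hmd h2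
    have hmem : mul (B a) (B a') ∈ (a.1 : Submodule K V) ⊓ sSup (S \ {(a.1 : Submodule K V)}) :=
      Submodule.mem_inf.2 ⟨h1, h2'⟩
    exact (Submodule.mem_bot K).1 ((hindep a.1.2).le_bot hmem)
  -- membership of the S/P/PP sets in the corresponding simple ideal
  have hSsub : ∀ a, Sset mul B a ⊆ (a.1 : Submodule K V) := by
    rintro a _ ⟨j', rfl, hj⟩
    by_cases hco : a.1 = j'.1
    · exact hco ▸ hBmem j'
    · exfalso
      rcases hj with h | h
      · exact h (hG1 a j' hco)
      · exact h (hG1 j' a fun hc => hco hc.symm)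
  have hPsub : ∀ a, Pset mul B a ⊆ (a.1 : Submodule K V) := by
    rintro ⟨I, ia⟩ _ ⟨j', rfl, hj⟩
    by_cases hco : j'.1 = I
    · exact hco ▸ hBmem j'
    · exfalso
      rcases hj with ⟨r, hr⟩ | ⟨s', hs'⟩
      · refine hr ?_
        have hy : mul (B j') (B r) ∈ (j'.1 : Submodule K V) :=
          (hIdeal j'.1 (B r) (B j') (hBmem j')).2
        rw [Module.Basis.coord_apply]
        exact hint.collectedBasis_repr_of_mem_ne v hco hy
      · refine hs' ?_
        have hy : mul (B s') (B j') ∈ (j'.1 : Submodule K V) :=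
          (hIdeal j'.1 (B s') (B j') (hBmem j')).1
        rw [Module.Basis.coord_apply]
        exact hint.collectedBasis_repr_of_mem_ne v hco hy
  have hPPsub : ∀ a, PPset mul B a ⊆ (a.1 : Submodule K V) := by
    rintro a _ ⟨x, hx, y, hy, rfl⟩
    exact (hIdeal a.1 y x (hPsub a hx)).2
  -- main division properties
  have hmain : IsSemiDivisionBasis mul B := by
    constructor
    · intro i x hxspan
      have hxI : x ∈ (i.1 : Submodule K V) :=
        (Submodule.span_le.2 (hSsub i)) hxspan
      constructor
      · intro hne
        have hcI : mul (B i) x ∈ (i.1 : Submodule K V) := (hIdeal i.1 (B i) x hxI).1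
        have := idealGen_eq_of_mem_simple (hsimp i.1 i.1.2) hcI hne
        rw [this]
        exact ⟨hBmem i, hxI⟩
      · intro hne
        have hcI : mul x (B i) ∈ (i.1 : Submodule K V) := (hIdeal i.1 x (B i) (hBmem i)).1
        have := idealGen_eq_of_mem_simple (hsimp i.1 i.1.2) hcI hne
        rw [this]
        exact ⟨hBmem i, hxI⟩
    · intro i x hxPP e heS
      have hxI : x ∈ (i.1 : Submodule K V) := hPPsub i hxPP
      have heI : e ∈ (i.1 : Submodule K V) := hSsub i heS
      constructor
      · intro hne
        have hcI : mul x e ∈ (i.1 : Submodule K V) := (hIdeal i.1 x e heI).1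
        have := idealGen_eq_of_mem_simple (hsimp i.1 i.1.2) hcI hne
        rw [this]
        exact ⟨heI, hxI⟩
      · intro hne
        have hcI : mul e x ∈ (i.1 : Submodule K V) := (hIdeal i.1 e x hxI).1
        have := idealGen_eq_of_mem_simple (hsimp i.1 i.1.2) hcI hne
        rw [this]
        exact ⟨heI, hxI⟩
  -- transport along `reindexRange`
  refine ⟨Set.range B, B.reindexRange, ?_⟩
  have hself : ∀ a (h : B a ∈ Set.range B), B.reindexRange ⟨B a, h⟩ = B a :=
    fun a h => B.reindexRange_self a
  have hSset : ∀ a (h : B a ∈ Set.range B),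
      Sset mul B.reindexRange ⟨B a, h⟩ = Sset mul B a := by
    intro a h
    ext w
    constructor
    · rintro ⟨j', hw, hj⟩
      obtain ⟨j, hj2⟩ := j'.2
      have hj' : j' = ⟨B j, Set.mem_range_self j⟩ := Subtype.ext hj2.symm
      rw [hj', hself j] at hw hj
      rw [hself a] at hj
      exact ⟨j, hw, hj⟩
    · rintro ⟨j, hw, hj⟩
      refine ⟨⟨B j, Set.mem_range_self j⟩, ?_, ?_⟩
      · rw [hself j]; exact hw
      · rw [hself j, hself a]; exact hj
  have hPset : ∀ a (h : B a ∈ Set.range B),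
      Pset mul B.reindexRange ⟨B a, h⟩ = Pset mul B a := by
    intro a h
    have hcoord : ∀ y : V, B.reindexRange.coord ⟨B a, h⟩ y = B.coord a y := by
      intro y
      rw [Module.Basis.coord_apply, Module.Basis.coord_apply, B.reindexRange_repr]
    ext w
    constructor
    · rintro ⟨j', hw, hj⟩
      obtain ⟨j, hj2⟩ := j'.2
      have hj' : j' = ⟨B j, Set.mem_range_self j⟩ := Subtype.ext hj2.symm
      rw [hj', hself j] at hw hj
      refine ⟨j, hw, ?_⟩
      rcases hj with ⟨r', hr⟩ | ⟨s', hs'⟩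
      · obtain ⟨r, hr2⟩ := r'.2
        have : r' = ⟨B r, Set.mem_range_self r⟩ := Subtype.ext hr2.symm
        rw [this, hself r, hcoord] at hr
        exact Or.inl ⟨r, hr⟩
      · obtain ⟨s'', hs2⟩ := s'.2
        have : s' = ⟨B s'', Set.mem_range_self s''⟩ := Subtype.ext hs2.symm
        rw [this, hself s'', hcoord] at hs'
        exact Or.inr ⟨s'', hs'⟩
    · rintro ⟨j, hw, hj⟩
      refine ⟨⟨B j, Set.mem_range_self j⟩, by rw [hself j]; exact hw, ?_⟩
      rcases hj with ⟨r, hr⟩ | ⟨s', hs'⟩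
      · refine Or.inl ⟨⟨B r, Set.mem_range_self r⟩, ?_⟩
        rw [hself j, hself r, hcoord]
        exact hr
      · refine Or.inr ⟨⟨B s', Set.mem_range_self s'⟩, ?_⟩
        rw [hself j, hself s', hcoord]
        exact hs'
  have hPPset : ∀ a (h : B a ∈ Set.range B),
      PPset mul B.reindexRange ⟨B a, h⟩ = PPset mul B a := by
    intro a h
    unfold PPset
    rw [hPset a h]
  constructor
  · rintro ⟨-, a, rfl⟩ x hx
    rw [hSset a (Set.mem_range_self a)] at hx
    rw [hself a (Set.mem_range_self a)]
    exact hmain.1 a x hx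
  · rintro ⟨-, a, rfl⟩ x hx e he
    rw [hPPset a (Set.mem_range_self a)] at hx
    rw [hSset a (Set.mem_range_self a)] at he
    exact hmain.2 a x hx e he
end ForwardBasis


/-- An arbitrary algebra is semisimple iff it has zero annihilator and
admits a semi-division linear basis. -/
theorem semisimple_iff_zeroAnn_and_semiDivisionBasis
    (mul : V →ₗ[K] V →ₗ[K] V) :
    IsSemisimple mul ↔
      HasZeroAnn mul ∧
        ∃ (s : Set V) (b : Module.Basis s K V), IsSemiDivisionBasis mul b := by
  constructor
  · intro h
    exact ⟨hasZeroAnn_of_isSemisimple h, exists_semiDivisionBasis_of_isSemisimple h⟩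
  · rintro ⟨hann, s, b, hsd⟩
    exact isSemisimple_of_semiDivisionBasis hann hsd
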